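/- Let σ > 0, let p be a nonnegative integer, and let x ∈ ℝ. Then the Gaussian convolution of the monomial y ↦ y^p satisfies ∫_ℝ y^p · k_σ(x − y) dy = (iσ)^p · h_p(x/(iσ)), where the right-hand side is evaluated over the complex numbers (and is in fact real), i is the imaginary unit, and h_p is the p-th probabilist's Hermite polynomial. -/

import Mathlib

open MeasureTheory

/-- One-dimensional Gaussian kernel `k_σ(x) = (√(2π) σ)⁻¹ exp(−x²/(2σ²))`. -/
noncomputable def gauss1 (σ x : ℝ) : ℝ :=
  (Real.sqrt (2 * Real.pi) * σ)⁻¹ * Real.exp (-x ^ 2 / (2 * σ ^ 2))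

open Polynomial Filter

lemma hermite_deriv_aux : ∀ n : ℕ,
    derivative (hermite (n + 1)) = ((n : ℤ[X]) + 1) * hermite n
  | 0 => by simp [hermite_one, hermite_zero]
  | n + 1 => by
    have ih := hermite_deriv_aux n
    rw [hermite_succ (n + 1), derivative_sub, derivative_mul, derivative_X, one_mul, ih,
      derivative_mul]
    simp only [derivative_add, derivative_natCast, derivative_one, add_zero, zero_add, zero_mul]
    rw [hermite_succ n]
    push_cast
    ring

lemma aeval_hermite_rec (p : ℕ) (z : ℂ) :
    aeval z (hermite (p + 2)) = z * aeval z (hermite (p + 1)) -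
      ((p : ℂ) + 1) * aeval z (hermite p) := by
  rw [hermite_succ (p + 1), map_sub, map_mul, aeval_X, hermite_deriv_aux p, map_mul]
  simp

lemma gauss1_eq (σ y : ℝ) :
    gauss1 σ y = (Real.sqrt (2 * Real.pi) * σ)⁻¹ * Real.exp (-((2 * σ ^ 2)⁻¹) * y ^ 2) := by
  unfold gauss1
  congr 1
  rw [div_eq_mul_inv]
  ring

lemma integrable_poly_exp {b : ℝ} (hb : 0 < b) (P : ℝ[X]) :
    Integrable fun y : ℝ => P.eval y * Real.exp (-b * y ^ 2) := by
  induction P using Polynomial.induction_on' with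
  | add p q hp hq => simpa [add_mul, Pi.add_def] using hp.add hq
  | monomial n a =>
    have hn : (-1 : ℝ) < (n : ℝ) := lt_of_lt_of_le neg_one_lt_zero (by exact_mod_cast n.zero_le)
    have h2 := integrable_rpow_mul_exp_neg_mul_sq hb hn
    simp_rw [Real.rpow_natCast] at h2
    have h3 := h2.const_mul a
    simpa [eval_monomial, mul_assoc] using h3

lemma integrable_poly_gauss {σ : ℝ} (hσ : 0 < σ) (P : ℝ[X]) :
    Integrable fun y : ℝ => P.eval y * gauss1 σ y := by
  have hb : (0 : ℝ) < (2 * σ ^ 2)⁻¹ := by positivity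
  have h := (integrable_poly_exp hb P).const_mul ((Real.sqrt (2 * Real.pi) * σ)⁻¹)
  refine h.congr (Filter.Eventually.of_forall fun y => ?_)
  simp only [gauss1_eq]
  ring

lemma gauss1_hasDerivAt {σ : ℝ} (hσ : 0 < σ) (y : ℝ) :
    HasDerivAt (gauss1 σ) (-y / σ ^ 2 * gauss1 σ y) y := by
  have h1 : HasDerivAt (fun t : ℝ => -t ^ 2 / (2 * σ ^ 2)) (-y / σ ^ 2) y := by
    have h := ((hasDerivAt_pow 2 y).neg.div_const (2 * σ ^ 2))
    refine h.congr_deriv ?_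
    have : σ ^ 2 ≠ 0 := by positivity
    field_simp
    ring
  have h2 := (h1.exp).const_mul ((Real.sqrt (2 * Real.pi) * σ)⁻¹)
  have hfeq : gauss1 σ = fun t : ℝ =>
      (Real.sqrt (2 * Real.pi) * σ)⁻¹ * Real.exp (-t ^ 2 / (2 * σ ^ 2)) := rfl
  have hval : -y / σ ^ 2 * gauss1 σ y = (Real.sqrt (2 * Real.pi) * σ)⁻¹ *
      (Real.exp (-y ^ 2 / (2 * σ ^ 2)) * (-y / σ ^ 2)) := by
    unfold gauss1; ring
  rw [hval, hfeq]
  exact h2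

lemma integral_gauss1 {σ : ℝ} (hσ : 0 < σ) : ∫ y : ℝ, gauss1 σ y = 1 := by
  have h : ∀ y : ℝ, gauss1 σ y =
      (Real.sqrt (2 * Real.pi) * σ)⁻¹ * Real.exp (-((2 * σ ^ 2)⁻¹) * y ^ 2) := gauss1_eq σ
  simp_rw [h]
  rw [integral_const_mul, integral_gaussian]
  have h2 : Real.pi / (2 * σ ^ 2)⁻¹ = (2 * Real.pi) * σ ^ 2 := by
    field_simp
  have h3 : Real.sqrt (2 * Real.pi * σ ^ 2) = Real.sqrt (2 * Real.pi) * σ := by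
    rw [show 2 * Real.pi * σ ^ 2 = (2 * Real.pi) * σ ^ 2 by ring,
      Real.sqrt_mul (by positivity), Real.sqrt_sq hσ.le]
  rw [h2, h3]
  exact inv_mul_cancel₀ (by positivity)

lemma integral_id_gauss1 {σ : ℝ} (hσ : 0 < σ) : ∫ y : ℝ, y * gauss1 σ y = 0 := by
  have h := integral_neg_eq_self (fun y : ℝ => y * gauss1 σ y) volume
  have heq : ∀ y : ℝ, (-y) * gauss1 σ (-y) = -(y * gauss1 σ y) := by
    intro y
    unfold gauss1
    rw [neg_pow, show (-1 : ℝ) ^ 2 = 1 by norm_num, one_mul]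
    ring
  simp_rw [heq, integral_neg] at h
  linarith

lemma conv_poly {σ : ℝ} (hσ : 0 < σ) (x : ℝ) (p : ℕ) :
    ((∫ u : ℝ, (x - u) ^ p * gauss1 σ u : ℝ) : ℂ) =
      (Complex.I * σ) ^ p * aeval ((x : ℂ) / (Complex.I * σ)) (hermite p) := by
  have hσ' : (σ : ℂ) ≠ 0 := by exact_mod_cast hσ.ne'
  have hz : (Complex.I * (σ : ℂ)) ≠ 0 := mul_ne_zero Complex.I_ne_zero hσ'
  induction p using Nat.twoStepInduction with
  | zero => simp [integral_gauss1 hσ, hermite_zero]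
  | one =>
    have hre : ∫ u : ℝ, (x - u) ^ 1 * gauss1 σ u = x := by
      have hi1 : Integrable (fun u : ℝ => x * gauss1 σ u) := by
        simpa using (integrable_poly_gauss hσ (C x))
      have hi2 : Integrable (fun u : ℝ => u * gauss1 σ u) := by
        simpa using (integrable_poly_gauss hσ X)
      simp_rw [pow_one, sub_mul]
      rw [integral_sub hi1 hi2, integral_const_mul, integral_gauss1 hσ,
        integral_id_gauss1 hσ]
      ring
    rw [hre, hermite_one, aeval_X, pow_one]
    field_simp
  | more p ih ih1 =>
    set g := gauss1 σ with hg
    -- integrability facts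
    have Ip : Integrable (fun u : ℝ => (x - u) ^ p * g u) := by
      have := integrable_poly_gauss hσ ((C x - X) ^ p)
      simpa using this
    have Ip1 : Integrable (fun u : ℝ => (x - u) ^ (p + 1) * g u) := by
      have := integrable_poly_gauss hσ ((C x - X) ^ (p + 1))
      simpa using this
    have IB : Integrable (fun u : ℝ => (x - u) ^ (p + 1) * u * g u) := by
      have := integrable_poly_gauss hσ ((C x - X) ^ (p + 1) * X)
      simpa [mul_assoc] using this
    -- derivative facts
    have hU : ∀ y : ℝ, HasDerivAt (fun y : ℝ => (x - y) ^ (p + 1))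
        (-(((p : ℝ) + 1) * (x - y) ^ p)) y := by
      intro y
      have h0 : HasDerivAt (fun y : ℝ => x - y) (-1) y := (hasDerivAt_id y).const_sub x
      have h := h0.pow (p + 1)
      refine h.congr_deriv ?_
      push_cast
      simp
    have hV : ∀ y : ℝ, HasDerivAt g (-y / σ ^ 2 * g y) y := fun y => gauss1_hasDerivAt hσ y
    have huv' : Integrable ((fun y : ℝ => (x - y) ^ (p + 1)) * fun y => -y / σ ^ 2 * g y) := by
      have := (IB.const_mul (-(σ ^ 2)⁻¹))
      refine this.congr (Filter.Eventually.of_forall fun y => ?_)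
      simp only [Pi.mul_apply]
      field_simp
    have hu'v : Integrable ((fun y : ℝ => -(((p : ℝ) + 1) * (x - y) ^ p)) * g) := by
      have := (Ip.const_mul (-((p : ℝ) + 1)))
      refine this.congr (Filter.Eventually.of_forall fun y => ?_)
      simp only [Pi.mul_apply]
      ring
    have huv : Integrable ((fun y : ℝ => (x - y) ^ (p + 1)) * g) := by
      refine Ip1.congr (Filter.Eventually.of_forall fun y => ?_)
      simp [Pi.mul_apply]
    have ibp := integral_mul_deriv_eq_deriv_mul_of_integrable (fun y _ => hU y) (fun y _ => hV y) huv' hu'v huv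
    -- compute both sides of ibp
    have lhs_eq : ∫ y : ℝ, (x - y) ^ (p + 1) * (-y / σ ^ 2 * g y) =
        -(σ ^ 2)⁻¹ * ∫ y : ℝ, (x - y) ^ (p + 1) * y * g y := by
      rw [← integral_const_mul]
      congr 1
      funext y
      field_simp
    have rhs_eq : (- ∫ y : ℝ, -(((p : ℝ) + 1) * (x - y) ^ p) * g y) =
        ((p : ℝ) + 1) * ∫ y : ℝ, (x - y) ^ p * g y := by
      rw [← integral_neg, ← integral_const_mul]
      congr 1
      funext y
      ring
    rw [lhs_eq, rhs_eq] at ibp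
    have hσ2 : (σ : ℝ) ^ 2 ≠ 0 := by positivity
    have hJ : ∫ y : ℝ, (x - y) ^ (p + 1) * y * g y =
        -(σ ^ 2 * ((p : ℝ) + 1) * ∫ y : ℝ, (x - y) ^ p * g y) := by
      have := ibp
      field_simp at this ⊢
      linarith
    -- the real recurrence
    have key : ∫ u : ℝ, (x - u) ^ (p + 2) * g u =
        x * (∫ u : ℝ, (x - u) ^ (p + 1) * g u) +
          σ ^ 2 * ((p : ℝ) + 1) * ∫ u : ℝ, (x - u) ^ p * g u := by
      have hsplit : ∀ u : ℝ, (x - u) ^ (p + 2) * g u =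
          x * ((x - u) ^ (p + 1) * g u) - (x - u) ^ (p + 1) * u * g u := by
        intro u
        rw [pow_succ]
        ring
      simp_rw [hsplit]
      rw [integral_sub (Ip1.const_mul x) IB, integral_const_mul, hJ]
      ring
    -- pass to ℂ
    have keyC : ((∫ u : ℝ, (x - u) ^ (p + 2) * g u : ℝ) : ℂ) =
        (x : ℂ) * ((∫ u : ℝ, (x - u) ^ (p + 1) * g u : ℝ) : ℂ) +
          (σ : ℂ) ^ 2 * ((p : ℂ) + 1) * ((∫ u : ℝ, (x - u) ^ p * g u : ℝ) : ℂ) := by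
      rw [key]
      push_cast
      ring
    rw [keyC, ih, ih1, aeval_hermite_rec p]
    set w := Complex.I * (σ : ℂ) with hw
    have hsq : w ^ 2 = -(σ : ℂ) ^ 2 := by
      rw [hw, mul_pow, Complex.I_sq]
      ring
    have hxw : w * ((x : ℂ) / w) = x := by
      field_simp
    set H1 := aeval ((x : ℂ) / w) (hermite (p + 1)) with hH1
    set H0 := aeval ((x : ℂ) / w) (hermite p) with hH0
    have hterm1 : w ^ (p + 2) * ((x : ℂ) / w * H1) = (x : ℂ) * (w ^ (p + 1) * H1) := by
      rw [pow_succ, mul_assoc, show w * ((x : ℂ) / w * H1) = (x : ℂ) * H1 by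
        rw [← mul_assoc, hxw]]
      ring
    have hterm2 : w ^ (p + 2) * (((p : ℂ) + 1) * H0) =
        -(σ : ℂ) ^ 2 * (((p : ℂ) + 1) * (w ^ p * H0)) := by
      rw [pow_add, hsq]
      ring
    rw [mul_sub, hterm1, hterm2]
    ring

theorem gaussian_convolution_monomial (σ : ℝ) (hσ : 0 < σ) (p : ℕ) (x : ℝ) :
    ((∫ y : ℝ, y ^ p * gauss1 σ (x - y)) : ℂ) =
      (Complex.I * σ) ^ p *
        Polynomial.aeval ((x : ℂ) / (Complex.I * σ)) (Polynomial.hermite p) := by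
  have h := integral_sub_left_eq_self (fun u : ℝ => (x - u) ^ p * gauss1 σ u) volume x
  simp only [sub_sub_cancel] at h
  calc (∫ y : ℝ, ((y : ℂ)) ^ p * ((gauss1 σ (x - y) : ℝ) : ℂ))
      = ((∫ y : ℝ, y ^ p * gauss1 σ (x - y) : ℝ) : ℂ) := by
        simp_rw [← Complex.ofReal_pow, ← Complex.ofReal_mul]
        exact integral_ofReal
    _ = ((∫ u : ℝ, (x - u) ^ p * gauss1 σ u : ℝ) : ℂ) := by rw [h]
    _ = _ := conv_poly hσ x p
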